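/- Let R be a commutative ring, P₀ a finitely generated projective R-module of rank 2, n ≥ 4, and P_n = P₀ ⊕ Re₃ ⊕ ⋯ ⊕ Re_n. Let a = (a₀, a₃, …, a_n) ∈ Um(P_n) and let I = ⟨a₄, …, a_n⟩ ⊆ R. Let b = (b₀, b₃) and b' = (b'₀, b'₃) be R-linear maps P₃ = P₀ ⊕ Re₃ → R such that (b − b')(P₃) ⊆ I and such that the induced map P₃/IP₃ → R/I of b is surjective. Then the R-linear map (b₀, b₃, a₄, …, a_n) : P_n → R is surjective, and there exists φ ∈ E(P_n) such that (b'₀, b'₃, a₄, …, a_n) ∘ φ = (b₀, b₃, a₄, …, a_n). -/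

import Mathlib

open Function

section Defs

variable (R : Type*) [CommRing R] (M : Type*) [AddCommGroup M] [Module R M] (m : ℕ)

/-- `Pn R M m` models `P_n = P₀ ⊕ Re₃ ⊕ ⋯ ⊕ Re_n` with `m = n - 2` free summands. -/
abbrev Pn := M × (Fin m → R)

/-- Projection onto `P₀`. -/
def proj0 : Pn R M m →ₗ[R] M := LinearMap.fst R M (Fin m → R)

/-- Projection `π_{k,n}` onto the `i`-th free summand. -/
def projF (i : Fin m) : Pn R M m →ₗ[R] R :=
  (LinearMap.proj i).comp (LinearMap.snd R M (Fin m → R))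

/-- Inclusion of `P₀`. -/
def incl0 : M →ₗ[R] Pn R M m := LinearMap.inl R M (Fin m → R)

/-- Inclusion of the `i`-th free summand. -/
def inclF (i : Fin m) : R →ₗ[R] Pn R M m :=
  (LinearMap.inr R M (Fin m → R)).comp (LinearMap.single R (fun _ => R) i)

/-- An endomorphism is elementary if it is `id + s` where `s` maps one direct
summand of `P₀ ⊕ Re₃ ⊕ ⋯ ⊕ Re_n` into a different one. -/
def IsElementary (φ : Module.End R (Pn R M m)) : Prop :=
  (∃ i : Fin m, ∃ t : M →ₗ[R] R, φ = LinearMap.id + (inclF R M m i) ∘ₗ t ∘ₗ (proj0 R M m)) ∨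
  (∃ i : Fin m, ∃ t : R →ₗ[R] M, φ = LinearMap.id + (incl0 R M m) ∘ₗ t ∘ₗ (projF R M m i)) ∨
  (∃ i j : Fin m, i ≠ j ∧ ∃ t : R →ₗ[R] R,
    φ = LinearMap.id + (inclF R M m i) ∘ₗ t ∘ₗ (projF R M m j))

/-- `E(P_n)`: the subgroup of `Aut(P_n)` generated by elementary automorphisms. -/
def Elem : Subgroup (Module.End R (Pn R M m))ˣ :=
  Subgroup.closure { φ : (Module.End R (Pn R M m))ˣ | IsElementary R M m ↑φ }

/-- The `i`-th free coordinate `a_i = a(e_i)` of a linear map `a : P_n → R`. -/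
def coord (a : Pn R M m →ₗ[R] R) (i : Fin m) : R := a (inclF R M m i 1)

/-- The map obtained from `a` by replacing its `i`-th free coordinate by `c`. -/
def replace (a : Pn R M m →ₗ[R] R) (i : Fin m) (c : R) : Pn R M m →ₗ[R] R :=
  a + (c - coord R M m a i) • projF R M m i

/-- A module has rank two if its localization at every prime has rank two. -/
def RankTwo : Prop :=
  ∀ (p : Ideal R) (_ : p.IsPrime),
    Module.finrank (Localization.AtPrime p) (LocalizedModule p.primeCompl M) = 2

/-- Given `b = (b₀, b₃) : P₃ → R` and `a : P_n → R`, the map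
`(b₀, b₃, a₄, …, a_n) : P_n → R`. -/
def combine (h : 0 < m) (b : M × R →ₗ[R] R) (a : Pn R M m →ₗ[R] R) :
    Pn R M m →ₗ[R] R :=
  b ∘ₗ (LinearMap.prod (proj0 R M m) (projF R M m ⟨0, h⟩)) +
    ∑ i ∈ Finset.univ.erase (⟨0, h⟩ : Fin m), coord R M m a i • projF R M m i

end Defs

theorem aux_prod {A : Type*} [Ring A] {ι : Type*} [DecidableEq ι] (H : Subgroup Aˣ)
    (S : ι → A) :
    ∀ T : Finset ι, (∀ i ∈ T, ∀ j ∈ T, S i * S j = 0) →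
    (∀ i ∈ T, ∃ u ∈ H, (u : A) = 1 + S i) →
    ∃ φ ∈ H, (φ : A) = 1 + ∑ i ∈ T, S i := by
  intro T
  induction T using Finset.induction_on with
  | empty => exact fun _ _ => ⟨1, H.one_mem, by simp⟩
  | @insert k T' hk ih =>
    intro hnil hmem
    obtain ⟨ψ, hψ, hψv⟩ := ih
      (fun i hi j hj => hnil i (Finset.mem_insert_of_mem hi) j (Finset.mem_insert_of_mem hj))
      (fun i hi => hmem i (Finset.mem_insert_of_mem hi))
    obtain ⟨u, hu, huv⟩ := hmem k (Finset.mem_insert_self k T')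
    refine ⟨u * ψ, mul_mem hu hψ, ?_⟩
    have hzero : S k * ∑ i ∈ T', S i = 0 := by
      rw [Finset.mul_sum]
      exact Finset.sum_eq_zero fun i hi =>
        hnil k (Finset.mem_insert_self _ _) i (Finset.mem_insert_of_mem hi)
    rw [Units.val_mul, huv, hψv, Finset.sum_insert hk, add_mul, one_mul, mul_add, mul_one,
      hzero, add_zero]
    abel

def sqUnit {A : Type*} [Ring A] (s : A) (hs : s * s = 0) : Aˣ :=
  ⟨1 + s, 1 - s,
    by rw [mul_sub, mul_one, add_mul, one_mul, hs, add_zero, add_sub_cancel_right],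
    by rw [sub_mul, one_mul, mul_add, mul_one, hs, add_zero, add_sub_cancel_right]⟩

theorem statement8_aux {R : Type*} [CommRing R] {M : Type*} [AddCommGroup M] [Module R M]
    [Module.Projective R M] {m : ℕ} (h : 0 < m) (a : Pn R M m →ₗ[R] R)
    (I : Ideal R)
    (hI : I = Ideal.span {x : R | ∃ i : Fin m, i ≠ ⟨0, h⟩ ∧ x = coord R M m a i})
    (b b' : M × R →ₗ[R] R)
    (hdiff : ∀ x : M × R, b x - b' x ∈ I)
    (hbsurj : Function.Surjective ((Ideal.Quotient.mk I) ∘ b)) :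
    Function.Surjective (combine R M m h b a) ∧
      ∃ φ ∈ Elem R M m, (combine R M m h b' a) ∘ₗ (φ : Module.End R (Pn R M m)) =
        combine R M m h b a := by
  classical
  set z : Fin m := ⟨0, h⟩ with hzdef
  set T : Finset (Fin m) := Finset.univ.erase z with hTdef
  -- basic application lemma for `combine`
  have hcomb : ∀ (β : M × R →ₗ[R] R) (x : Pn R M m),
      combine R M m h β a x = β (x.1, x.2 z) + ∑ i ∈ T, coord R M m a i * x.2 i := by
    intro β x
    simp only [combine, proj0, projF, LinearMap.add_apply, LinearMap.comp_apply,
      LinearMap.prod_apply, Function.prod, LinearMap.fst_apply, LinearMap.snd_apply,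
      LinearMap.proj_apply, LinearMap.sum_apply, LinearMap.smul_apply, smul_eq_mul]
    rfl
  have hinclF : ∀ (i : Fin m) (r : R),
      inclF R M m i r = ((0 : M), Pi.single (M := fun _ => R) i r) := fun _ _ => rfl
  have hcomb_inclF : ∀ (β : M × R →ₗ[R] R), ∀ i ∈ T, ∀ r : R,
      combine R M m h β a (inclF R M m i r) = coord R M m a i * r := by
    intro β i hi r
    have hiz : i ≠ z := (Finset.mem_erase.mp hi).1
    rw [hcomb, hinclF]
    have h1 : Pi.single (M := fun _ => R) i r z = 0 :=
      Pi.single_eq_of_ne (M := fun _ => R) (Ne.symm hiz) r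
    have h2 : ∑ j ∈ T, coord R M m a j * Pi.single (M := fun _ => R) i r j
        = coord R M m a i * r := by
      rw [Finset.sum_eq_single_of_mem i hi fun j _ hji => by
        rw [Pi.single_eq_of_ne (M := fun _ => R) hji, mul_zero]]
      rw [Pi.single_eq_same (M := fun _ => R) i r]
    show β (0, Pi.single (M := fun _ => R) i r z) + _ = _
    rw [h1, h2, Prod.mk_zero_zero, map_zero, zero_add]
  have hIgen : ∀ i ∈ T, coord R M m a i ∈ I := by
    intro i hi
    rw [hI]
    exact Ideal.subset_span ⟨i, (Finset.mem_erase.mp hi).1, rfl⟩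
  -- Part 1 : surjectivity
  have hrange : ∀ y : R, y ∈ LinearMap.range (combine R M m h b a) := by
    have hIr : I ≤ LinearMap.range (combine R M m h b a) := by
      rw [hI, Ideal.span_le]
      rintro x ⟨i, hi, rfl⟩
      exact ⟨inclF R M m i 1, by
        rw [hcomb_inclF b i (Finset.mem_erase.mpr ⟨hi, Finset.mem_univ i⟩), mul_one]⟩
    have hbr : ∀ x : M × R, b x ∈ LinearMap.range (combine R M m h b a) := by
      intro x
      refine ⟨(x.1, Pi.single (M := fun _ => R) z x.2), ?_⟩
      rw [hcomb]
      show b (x.1, Pi.single (M := fun _ => R) z x.2 z) + _ = _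
      have h1 : Pi.single (M := fun _ => R) z x.2 z = x.2 :=
        Pi.single_eq_same (M := fun _ => R) z x.2
      have h2 : ∑ i ∈ T, coord R M m a i * Pi.single (M := fun _ => R) z x.2 i = 0 := by
        refine Finset.sum_eq_zero fun i hi => ?_
        rw [Pi.single_eq_of_ne (M := fun _ => R) (Finset.mem_erase.mp hi).1, mul_zero]
      rw [h1, h2, add_zero]
    intro y
    obtain ⟨x, hx⟩ := hbsurj (Ideal.Quotient.mk I y)
    have hyx : y - b x ∈ I := by
      have hx' : Ideal.Quotient.mk I (b x) = Ideal.Quotient.mk I y := hx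
      rw [← Ideal.Quotient.eq_zero_iff_mem, map_sub, hx', sub_self]
    have := add_mem (hIr hyx) (hbr x)
    rwa [sub_add_cancel] at this
  -- Part 2 : lifting of b - b' through the generators of I
  let g : (Fin m → R) →ₗ[R] R := ∑ i ∈ T, coord R M m a i • LinearMap.proj i
  have hg : ∀ r, g r = ∑ i ∈ T, coord R M m a i * r i := by
    intro r
    simp only [g, LinearMap.sum_apply, LinearMap.smul_apply, LinearMap.proj_apply, smul_eq_mul]
  have hgI : ∀ r, g r ∈ I := by
    intro r; rw [hg]
    exact Submodule.sum_mem I fun i hi => I.mul_mem_right _ (hIgen i hi)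
  have hIg : I ≤ LinearMap.range g := by
    rw [hI, Ideal.span_le]
    rintro x ⟨i, hi, rfl⟩
    refine ⟨Pi.single (M := fun _ => R) i 1, ?_⟩
    rw [hg]
    have hiT : i ∈ T := Finset.mem_erase.mpr ⟨hi, Finset.mem_univ i⟩
    rw [Finset.sum_eq_single_of_mem i hiT fun j _ hji => by
      rw [Pi.single_eq_of_ne (M := fun _ => R) hji, mul_zero]]
    rw [Pi.single_eq_same (M := fun _ => R) i 1, mul_one]
  let g' : (Fin m → R) →ₗ[R] I := g.codRestrict (I.restrictScalars R) hgI
  have hg'surj : Function.Surjective g' := by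
    rintro ⟨y, hy⟩
    obtain ⟨r, hr⟩ := hIg hy
    exact ⟨r, Subtype.ext hr⟩
  let d : M × R →ₗ[R] R := b - b'
  let d' : M × R →ₗ[R] I := d.codRestrict (I.restrictScalars R) (fun x => hdiff x)
  obtain ⟨D, hD⟩ := Module.projective_lifting_property g' d' hg'surj
  have hDval : ∀ x : M × R, ∑ i ∈ T, coord R M m a i * D x i = b x - b' x := by
    intro x
    have h1 : g' (D x) = d' x := by rw [← LinearMap.comp_apply, hD]
    have h2 : g (D x) = d x := congrArg Subtype.val h1
    rw [← hg, h2]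
    rfl
  -- elementary endomorphisms
  let tA : Fin m → (M →ₗ[R] R) := fun i => (LinearMap.proj i ∘ₗ D) ∘ₗ LinearMap.inl R M R
  let tB : Fin m → (R →ₗ[R] R) := fun i => (LinearMap.proj i ∘ₗ D) ∘ₗ LinearMap.inr R M R
  let A : Fin m → Module.End R (Pn R M m) :=
    fun i => inclF R M m i ∘ₗ tA i ∘ₗ proj0 R M m
  let B : Fin m → Module.End R (Pn R M m) :=
    fun i => inclF R M m i ∘ₗ tB i ∘ₗ projF R M m z
  let S : Fin m → Module.End R (Pn R M m) := fun i => A i + B i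
  have hA_apply : ∀ i (x : Pn R M m),
      A i x = ((0 : M), Pi.single (M := fun _ => R) i (D (x.1, 0) i)) := fun _ _ => rfl
  have hB_apply : ∀ i (x : Pn R M m),
      B i x = ((0 : M), Pi.single (M := fun _ => R) i (D (0, x.2 z) i)) := fun _ _ => rfl
  have hS_apply : ∀ i (x : Pn R M m),
      S i x = ((0 : M), Pi.single (M := fun _ => R) i (D (x.1, x.2 z) i)) := by
    intro i x
    show A i x + B i x = _
    rw [hA_apply, hB_apply, Prod.mk_add_mk, add_zero, ← Pi.single_add, ← Pi.add_apply,
      ← map_add]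
    have : ((x.1, (0 : R)) : M × R) + ((0 : M), x.2 z) = (x.1, x.2 z) := by
      rw [Prod.mk_add_mk, add_zero, zero_add]
    rw [this]
  -- square-zero facts
  have hAA : ∀ i j, A i * A j = 0 := by
    intro i j
    refine LinearMap.ext fun x => ?_
    rw [Module.End.mul_apply, hA_apply j x, hA_apply]
    show inclF R M m i (tA i 0) = 0
    rw [map_zero, map_zero]
  have hBB : ∀ i, ∀ j ∈ T, B i * B j = 0 := by
    intro i j hj
    refine LinearMap.ext fun x => ?_
    rw [Module.End.mul_apply, hB_apply j x, hB_apply]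
    show inclF R M m i (tB i (Pi.single (M := fun _ => R) j (D (0, x.2 z) j) z)) = 0
    rw [Pi.single_eq_of_ne (M := fun _ => R) (Ne.symm (Finset.mem_erase.mp hj).1),
      map_zero, map_zero]
  have hAB : ∀ i j, A i * B j = 0 := by
    intro i j
    refine LinearMap.ext fun x => ?_
    rw [Module.End.mul_apply, hB_apply, hA_apply]
    show inclF R M m i (tA i 0) = 0
    rw [map_zero, map_zero]
  have hBA : ∀ i, ∀ j ∈ T, B i * A j = 0 := by
    intro i j hj
    refine LinearMap.ext fun x => ?_
    rw [Module.End.mul_apply, hA_apply, hB_apply]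
    show inclF R M m i (tB i (Pi.single (M := fun _ => R) j (D (x.1, 0) j) z)) = 0
    rw [Pi.single_eq_of_ne (M := fun _ => R) (Ne.symm (Finset.mem_erase.mp hj).1),
      map_zero, map_zero]
  have hSS : ∀ i ∈ T, ∀ j ∈ T, S i * S j = 0 := by
    intro i _ j hj
    show (A i + B i) * (A j + B j) = 0
    rw [mul_add, add_mul, add_mul, hAA i j, hAB i j, hBA i j hj, hBB i j hj]
    simp
  -- the elementary units
  have humem : ∀ i ∈ T, ∃ u ∈ Elem R M m, (u : Module.End R (Pn R M m)) = 1 + S i := by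
    intro i hi
    refine ⟨sqUnit (A i) (hAA i i) * sqUnit (B i) (hBB i i hi), mul_mem ?_ ?_, ?_⟩
    · apply Subgroup.subset_closure
      exact Or.inl ⟨i, tA i, rfl⟩
    · apply Subgroup.subset_closure
      exact Or.inr (Or.inr ⟨i, z, (Finset.mem_erase.mp hi).1, tB i,
        rfl⟩)
    · show (1 + A i) * (1 + B i) = 1 + S i
      rw [add_mul, one_mul, mul_add, mul_one, hAB i i, add_zero]
      show 1 + B i + A i = 1 + (A i + B i)
      rw [add_assoc, add_comm (B i)]
  obtain ⟨φ, hφ, hφv⟩ := aux_prod (Elem R M m) S T hSS humem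
  refine ⟨fun y => LinearMap.mem_range.mp (hrange y), φ, hφ, ?_⟩
  refine LinearMap.ext fun x => ?_
  rw [LinearMap.comp_apply, hφv]
  have hx1 : ((1 + ∑ i ∈ T, S i : Module.End R (Pn R M m))) x = x + ∑ i ∈ T, S i x := by
    simp only [LinearMap.add_apply, Module.End.one_apply, LinearMap.sum_apply]
  rw [hx1, map_add, map_sum]
  have hterm : ∀ i ∈ T, combine R M m h b' a (S i x) = coord R M m a i * D (x.1, x.2 z) i := by
    intro i hi
    rw [hS_apply, ← hinclF, hcomb_inclF b' i hi]
  rw [Finset.sum_congr rfl hterm, hDval (x.1, x.2 z), hcomb, hcomb]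
  ring


/-- Let `R` be a commutative ring, `P₀` a finitely generated projective
`R`-module of rank `2`, `n ≥ 4` and `P_n = P₀ ⊕ Re₃ ⊕ ⋯ ⊕ Re_n`. Let
`a = (a₀, a₃, …, a_n) : P_n → R` be surjective and `I = ⟨a₄, …, a_n⟩`. Let
`b = (b₀, b₃), b' = (b'₀, b'₃) : P₃ = P₀ ⊕ Re₃ → R` be such that `(b - b')(P₃) ⊆ I` and
the induced map `P₃/IP₃ → R/I` of `b` is surjective. Then `(b₀, b₃, a₄, …, a_n)` is
surjective and there is `φ ∈ E(P_n)` with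
`(b'₀, b'₃, a₄, …, a_n) ∘ φ = (b₀, b₃, a₄, …, a_n)`. -/
theorem statement8 (R : Type*) [CommRing R] (P₀ : Type*) [AddCommGroup P₀] [Module R P₀]
    [Module.Finite R P₀] [Module.Projective R P₀] (hrank : RankTwo R P₀)
    (n : ℕ) (hn : 4 ≤ n) (a : Pn R P₀ (n - 2) →ₗ[R] R) (ha : Function.Surjective a)
    (I : Ideal R)
    (hI : I = Ideal.span {x : R | ∃ i : Fin (n - 2), i ≠ ⟨0, by omega⟩ ∧
      x = coord R P₀ (n - 2) a i})
    (b b' : P₀ × R →ₗ[R] R)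
    (hdiff : ∀ x : P₀ × R, b x - b' x ∈ I)
    (hbsurj : Function.Surjective ((Ideal.Quotient.mk I) ∘ b)) :
    Function.Surjective (combine R P₀ (n - 2) (by omega) b a) ∧
      ∃ φ ∈ Elem R P₀ (n - 2),
        (combine R P₀ (n - 2) (by omega) b' a) ∘ₗ (φ : Module.End R (Pn R P₀ (n - 2))) =
          combine R P₀ (n - 2) (by omega) b a := by
  exact statement8_aux (by omega) a I hI b b' hdiff hbsurj
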